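/- Let A ∈ GL₂(ℤ) be a matrix with two distinct real eigenvalues of irrational slope eigenvectors, at least one of which is a positive eigenvalue. Then there exists a bi-ordering of ℤ² whose positive cone is invariant under the action of A; consequently the semidirect product ℤ² ⋊_A ℤ is bi-orderable. -/

import Mathlib

open Matrix Polynomial

/-- A group is bi-orderable if it admits a strict total order invariant under
left and right multiplication. -/
def IsBiOrderable (G : Type*) [Group G] : Prop :=
  ∃ r : G → G → Prop, IsStrictTotalOrder G r ∧
    (∀ f g h : G, r g h → r (f * g) (f * h)) ∧
    (∀ f g h : G, r g h → r (g * f) (h * f))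

/-- The automorphism of `ℤ²` (written multiplicatively) given by a matrix
`A ∈ GL₂(ℤ)`. -/
noncomputable def glAut (A : GL (Fin 2) ℤ) : MulAut (Multiplicative (Fin 2 → ℤ)) :=
  AddEquiv.toMultiplicative
    ((Matrix.GeneralLinearGroup.toLin A).toLinearEquiv.toAddEquiv)

/-- The monodromy action of `ℤ` on `ℤ²` generated by `A ∈ GL₂(ℤ)`. -/
noncomputable def monodromy (A : GL (Fin 2) ℤ) :
    Multiplicative ℤ →* MulAut (Multiplicative (Fin 2 → ℤ)) :=
  zpowersHom _ (glAut A)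

/-- Scaling behaviour of a functional under integer powers of an automorphism. -/
lemma zpow_scale {M : Type*} [Group M] (e : MulAut M) (ψ : M → ℝ) (c : ℝ) (hc : c ≠ 0)
    (h : ∀ x, ψ (e x) = c * ψ x) : ∀ (n : ℤ) (x : M), ψ ((e ^ n) x) = c ^ n * ψ x := by
  have hinv : ∀ x, ψ (e⁻¹ x) = c⁻¹ * ψ x := by
    intro x
    have h2 := h (e⁻¹ x)
    have h3 : e (e⁻¹ x) = x := by simp [MulAut.inv_def]
    rw [h3] at h2
    field_simp [h2]
    rw [h2]; ring
  intro n
  induction n using Int.induction_on with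
  | zero => intro x; simp
  | succ k ih =>
      intro x
      have he : e ^ ((k : ℤ) + 1) = e ^ (k : ℤ) * e := by
        rw [_root_.zpow_add_one]
      rw [he, MulAut.mul_apply, ih, h, zpow_add_one₀ hc]
      ring
  | pred k ih =>
      intro x
      have he : e ^ (-(k : ℤ) - 1) = e ^ (-(k : ℤ)) * e⁻¹ := by
        rw [_root_.zpow_sub_one]
      rw [he, MulAut.mul_apply, ih, hinv, zpow_sub_one₀ hc]
      ring

/-- Bi-orderability of the semidirect product, given a suitable functional on `ℤ²`. -/
lemma biOrderable_aux (A : GL (Fin 2) ℤ) (φ : (Fin 2 → ℤ) → ℝ) (lam₁ : ℝ) (hpos : 0 < lam₁)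
    (hφadd : ∀ g h : Fin 2 → ℤ, φ (g + h) = φ g + φ h)
    (hφne : ∀ g : Fin 2 → ℤ, g ≠ 0 → φ g ≠ 0)
    (hmon : ∀ (n : Multiplicative ℤ) (x : Multiplicative (Fin 2 → ℤ)),
      φ ((monodromy A n x).toAdd) = lam₁ ^ n.toAdd * φ x.toAdd) :
    IsBiOrderable (SemidirectProduct (Multiplicative (Fin 2 → ℤ))
      (Multiplicative ℤ) (monodromy A)) := by
  have hφzero : φ 0 = 0 := by
    have := hφadd 0 0
    simp at this
    linarith
  have hφneg : ∀ g : Fin 2 → ℤ, φ (-g) = -φ g := by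
    intro g
    have := hφadd g (-g)
    simp [hφzero] at this
    linarith
  have hmulAdd : ∀ x y : Multiplicative (Fin 2 → ℤ), (x * y).toAdd = x.toAdd + y.toAdd :=
    fun _ _ => rfl
  have hinvAdd : ∀ x : Multiplicative (Fin 2 → ℤ), (x⁻¹).toAdd = -x.toAdd := fun _ => rfl
  -- the positivity predicate
  have hpos_mul : ∀ x y : Multiplicative (Fin 2 → ℤ) ⋊[monodromy A] Multiplicative ℤ,
      (0 < x.right.toAdd ∨ (x.right = 1 ∧ 0 < φ x.left.toAdd)) →
      (0 < y.right.toAdd ∨ (y.right = 1 ∧ 0 < φ y.left.toAdd)) →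
      (0 < (x * y).right.toAdd ∨ ((x * y).right = 1 ∧ 0 < φ (x * y).left.toAdd)) := by
    intro x y hx hy
    rcases hx with hx | ⟨hx1, hx2⟩
    · left
      rw [SemidirectProduct.mul_right, toAdd_mul]
      rcases hy with hy | ⟨hy1, hy2⟩
      · linarith
      · rw [hy1]; simpa using hx
    · rcases hy with hy | ⟨hy1, hy2⟩
      · left
        rw [SemidirectProduct.mul_right, toAdd_mul, hx1]
        simpa using hy
      · right
        constructor
        · rw [SemidirectProduct.mul_right, hx1, hy1, mul_one]
        · have hl : (x * y).left = x.left * y.left := by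
            rw [SemidirectProduct.mul_left, hx1, _root_.map_one]
            rfl
          rw [hl, hmulAdd, hφadd]
          linarith
  have hpos_conj : ∀ f z : Multiplicative (Fin 2 → ℤ) ⋊[monodromy A] Multiplicative ℤ,
      (0 < z.right.toAdd ∨ (z.right = 1 ∧ 0 < φ z.left.toAdd)) →
      (0 < (f⁻¹ * z * f).right.toAdd ∨
        ((f⁻¹ * z * f).right = 1 ∧ 0 < φ (f⁻¹ * z * f).left.toAdd)) := by
    intro f z hz
    have hright : (f⁻¹ * z * f).right = z.right := by
      simp only [SemidirectProduct.mul_right, SemidirectProduct.inv_right]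
      rw [mul_comm f.right⁻¹ z.right, mul_assoc, inv_mul_cancel, mul_one]
    rcases hz with hz | ⟨hz1, hz2⟩
    · left; rw [hright]; exact hz
    · right
      refine ⟨by rw [hright, hz1], ?_⟩
      have hleft : (f⁻¹ * z * f).left = (monodromy A f.right⁻¹) z.left := by
        simp only [SemidirectProduct.mul_left, SemidirectProduct.mul_right,
          SemidirectProduct.inv_left, SemidirectProduct.inv_right, hz1, mul_one, ← _root_.map_mul]
        congr 1
        have : f.left⁻¹ * z.left * f.left = z.left := by
          rw [mul_comm (f.left⁻¹) z.left, mul_assoc, inv_mul_cancel, mul_one]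
        exact this
      rw [hleft, hmon]
      have h1 : (0:ℝ) < lam₁ ^ ((f.right⁻¹).toAdd) := zpow_pos hpos _
      positivity
  refine ⟨fun x y => 0 < (x⁻¹ * y).right.toAdd ∨
      ((x⁻¹ * y).right = 1 ∧ 0 < φ (x⁻¹ * y).left.toAdd),
    { trichotomous := ?_, irrefl := ?_, trans := ?_ }, ?_, ?_⟩
  · -- trichotomous
    intro x y
    rw [← or_iff_not_imp_left, ← or_iff_not_imp_left]
    refine Or.imp_right Or.symm ?_
    by_cases hxy : x = y
    · right; left; exact hxy
    · have hne1 : x⁻¹ * y ≠ 1 := by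
        intro h
        apply hxy
        have := congrArg (fun t => x * t) h
        simpa [← mul_assoc] using this.symm
      set z := x⁻¹ * y with hzdef
      have hinvz : z⁻¹ = y⁻¹ * x := by rw [hzdef]; group
      rcases lt_trichotomy (z.right.toAdd) 0 with h | h | h
      · right; right
        left
        rw [← hinvz, SemidirectProduct.inv_right, toAdd_inv]
        linarith
      · have hz1 : z.right = 1 := toAdd_eq_zero.mp h
        have hzl : z.left ≠ 1 := by
          intro h2
          exact hne1 (SemidirectProduct.ext h2 hz1)
        have hzl' : z.left.toAdd ≠ 0 := fun h2 => hzl (toAdd_eq_zero.mp h2)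
        rcases lt_or_gt_of_ne (hφne z.left.toAdd hzl') with h2 | h2
        · right; right
          right
          rw [← hinvz]
          refine ⟨by rw [SemidirectProduct.inv_right, hz1]; rfl, ?_⟩
          have hl : (z⁻¹).left = z.left⁻¹ := by
            rw [SemidirectProduct.inv_left, hz1, inv_one, _root_.map_one, MulAut.one_apply]
          rw [hl, hinvAdd, hφneg]
          linarith
        · left
          right
          exact ⟨hz1, h2⟩
      · left; left; exact h
  · -- irrefl
    intro x h
    rw [inv_mul_cancel] at h
    rcases h with h | ⟨h1, h2⟩
    · simp at h
    · rw [SemidirectProduct.one_left] at h2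
      have : ((1 : Multiplicative (Fin 2 → ℤ))).toAdd = 0 := rfl
      rw [this, hφzero] at h2
      linarith
  · -- trans
    intro x y z h1 h2
    have hxz : x⁻¹ * z = (x⁻¹ * y) * (y⁻¹ * z) := by group
    rw [hxz]
    exact hpos_mul _ _ h1 h2
  · -- left invariance
    intro f g h hr
    have hh : (f * g)⁻¹ * (f * h) = g⁻¹ * h := by group
    rw [hh]
    exact hr
  · -- right invariance
    intro f g h hr
    have hh : (g * f)⁻¹ * (h * f) = f⁻¹ * (g⁻¹ * h) * f := by group
    rw [hh]
    exact hpos_conj _ _ hr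

theorem torusBundleGroup_biOrderable (A : GL (Fin 2) ℤ) (lam₁ lam₂ : ℝ)
    (hchar : ((A : Matrix (Fin 2) (Fin 2) ℤ).map ((↑·) : ℤ → ℝ)).charpoly =
      (X - C lam₁) * (X - C lam₂))
    (hne : lam₁ ≠ lam₂) (hpos : 0 < lam₁)
    (hirr : ∀ (lam : ℝ) (v : Fin 2 → ℝ), v ≠ 0 →
      ((A : Matrix (Fin 2) (Fin 2) ℤ).map ((↑·) : ℤ → ℝ)).mulVec v = lam • v →
      Irrational (v 0 / v 1)) :
    (∃ P : Set (Fin 2 → ℤ),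
        (∀ a ∈ P, ∀ b ∈ P, a + b ∈ P) ∧
        (∀ g : Fin 2 → ℤ, g ≠ 0 → Xor' (g ∈ P) (-g ∈ P)) ∧
        (∀ v ∈ P, (A : Matrix (Fin 2) (Fin 2) ℤ).mulVec v ∈ P)) ∧
      IsBiOrderable (SemidirectProduct (Multiplicative (Fin 2 → ℤ))
        (Multiplicative ℤ) (monodromy A)) := by
  set B : Matrix (Fin 2) (Fin 2) ℝ :=
    ((A : Matrix (Fin 2) (Fin 2) ℤ).map ((↑·) : ℤ → ℝ)) with hBdef
  -- characteristic polynomial of a 2×2 matrix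
  have hcp : B.charpoly = (X - C (B 0 0)) * (X - C (B 1 1)) - C (B 0 1) * C (B 1 0) := by
    rw [Matrix.charpoly, Matrix.det_fin_two, Matrix.charmatrix_apply_eq,
      Matrix.charmatrix_apply_eq, Matrix.charmatrix_apply_ne _ _ _ (by decide),
      Matrix.charmatrix_apply_ne _ _ _ (by decide)]
    ring
  have heval : ∀ t : ℝ, (t - B 0 0) * (t - B 1 1) - B 0 1 * B 1 0 =
      (t - lam₁) * (t - lam₂) := by
    intro t
    have h := hchar
    rw [hcp] at h
    have := congrArg (Polynomial.eval t) h
    simpa using this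
  have htr : B 0 0 + B 1 1 = lam₁ + lam₂ := by
    linear_combination (1/2 : ℝ) * heval (-1) - (1/2 : ℝ) * heval 1
  have hdet : B 0 0 * B 1 1 - B 0 1 * B 1 0 = lam₁ * lam₂ := by
    linear_combination heval 0
  -- eigenvector for lam₂
  have hdetM : (B - lam₂ • (1 : Matrix (Fin 2) (Fin 2) ℝ)).det = 0 := by
    have h00 : (B - lam₂ • (1 : Matrix (Fin 2) (Fin 2) ℝ)) 0 0 = B 0 0 - lam₂ := by
      simp [Matrix.one_apply]
    have h01 : (B - lam₂ • (1 : Matrix (Fin 2) (Fin 2) ℝ)) 0 1 = B 0 1 := by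
      simp [Matrix.one_apply]
    have h10 : (B - lam₂ • (1 : Matrix (Fin 2) (Fin 2) ℝ)) 1 0 = B 1 0 := by
      simp [Matrix.one_apply]
    have h11 : (B - lam₂ • (1 : Matrix (Fin 2) (Fin 2) ℝ)) 1 1 = B 1 1 - lam₂ := by
      simp [Matrix.one_apply]
    rw [Matrix.det_fin_two, h00, h01, h10, h11]
    linear_combination hdet - lam₂ * htr
  obtain ⟨v, hvne, hveq⟩ := (Matrix.exists_mulVec_eq_zero_iff).2 hdetM
  have hv : B.mulVec v = lam₂ • v := by
    rw [Matrix.sub_mulVec, Matrix.smul_mulVec, Matrix.one_mulVec] at hveq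
    exact sub_eq_zero.mp hveq
  have e1 : B 0 0 * v 0 + B 0 1 * v 1 = lam₂ * v 0 := by
    have := congrFun hv 0
    simpa [Matrix.mulVec, dotProduct, Fin.sum_univ_two] using this
  have e2 : B 1 0 * v 0 + B 1 1 * v 1 = lam₂ * v 1 := by
    have := congrFun hv 1
    simpa [Matrix.mulVec, dotProduct, Fin.sum_univ_two] using this
  -- the functional
  set φ : (Fin 2 → ℤ) → ℝ := fun g => v 1 * (g 0 : ℝ) - v 0 * (g 1 : ℝ) with hφdef
  have hφadd : ∀ g h : Fin 2 → ℤ, φ (g + h) = φ g + φ h := by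
    intro g h
    simp only [hφdef, Pi.add_apply]
    push_cast
    ring
  have hφneg : ∀ g : Fin 2 → ℤ, φ (-g) = -φ g := by
    intro g
    simp only [hφdef, Pi.neg_apply]
    push_cast
    ring
  have hBA : ∀ i j, B i j = ((A : Matrix (Fin 2) (Fin 2) ℤ) i j : ℝ) := by
    intro i j; simp [hBdef, Matrix.map_apply]
  have hφA : ∀ g : Fin 2 → ℤ, φ ((A : Matrix (Fin 2) (Fin 2) ℤ).mulVec g) = lam₁ * φ g := by
    intro g
    simp only [hφdef, Matrix.mulVec, dotProduct, Fin.sum_univ_two]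
    push_cast
    rw [← hBA, ← hBA, ← hBA, ← hBA]
    linear_combination (g 1 : ℝ) * e1 - (g 0 : ℝ) * e2 +
      (v 1 * (g 0 : ℝ) - v 0 * (g 1 : ℝ)) * htr
  have hφne : ∀ g : Fin 2 → ℤ, g ≠ 0 → φ g ≠ 0 := by
    intro g hg hzero
    set gr : Fin 2 → ℝ := fun i => (g i : ℝ) with hgrdef
    have hgrne : gr ≠ 0 := by
      intro h
      apply hg
      funext i
      have := congrFun h i
      simpa [hgrdef] using this
    have hv01 : v 0 ≠ 0 ∨ v 1 ≠ 0 := by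
      by_contra h
      push_neg at h
      apply hvne
      funext j
      fin_cases j <;> simp [h.1, h.2]
    have hs : v 1 * gr 0 - v 0 * gr 1 = 0 := hzero
    have hc0 : B 0 0 * gr 0 + B 0 1 * gr 1 = lam₂ * gr 0 := by
      rcases hv01 with h0 | h0
      · exact mul_left_cancel₀ h0 (by linear_combination (gr 0 : ℝ) * e1 - B 0 1 * hs)
      · exact mul_left_cancel₀ h0 (by linear_combination (gr 1 : ℝ) * e1 +
          (B 0 0 - lam₂) * hs)
    have hc1 : B 1 0 * gr 0 + B 1 1 * gr 1 = lam₂ * gr 1 := by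
      rcases hv01 with h0 | h0
      · exact mul_left_cancel₀ h0 (by linear_combination (gr 0 : ℝ) * e2 +
          (lam₂ - B 1 1) * hs)
      · exact mul_left_cancel₀ h0 (by linear_combination (gr 1 : ℝ) * e2 + B 1 0 * hs)
    have heig : B.mulVec gr = lam₂ • gr := by
      funext i
      fin_cases i
      · simpa [Matrix.mulVec, dotProduct, Fin.sum_univ_two] using hc0
      · simpa [Matrix.mulVec, dotProduct, Fin.sum_univ_two] using hc1
    have hi := hirr lam₂ gr hgrne heig
    have hre : gr 0 / gr 1 = ((((g 0 : ℚ) / (g 1 : ℚ)) : ℚ) : ℝ) := by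
      show ((g 0 : ℝ)) / ((g 1 : ℝ)) = _
      push_cast
      ring
    rw [hre] at hi
    exact (Rat.not_irrational _) hi
  constructor
  · refine ⟨{g | 0 < φ g}, ?_, ?_, ?_⟩
    · intro a ha b hb
      simp only [Set.mem_setOf_eq] at *
      rw [hφadd]; linarith
    · intro g hg
      have h1 := hφne g hg
      have h2 := hφneg g
      simp only [Set.mem_setOf_eq]
      rcases lt_or_gt_of_ne h1 with h | h
      · exact Or.inr ⟨by rw [h2]; linarith, by intro hc; linarith⟩
      · exact Or.inl ⟨h, by rw [h2]; intro hc; linarith⟩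
    · intro w hw
      simp only [Set.mem_setOf_eq] at *
      rw [hφA]
      positivity
  · apply biOrderable_aux A φ lam₁ hpos hφadd hφne
    have hglAut : ∀ x : Multiplicative (Fin 2 → ℤ),
        ((glAut A) x).toAdd = (A : Matrix (Fin 2) (Fin 2) ℤ).mulVec x.toAdd := fun _ => rfl
    have hψ : ∀ x : Multiplicative (Fin 2 → ℤ), φ ((glAut A x).toAdd) = lam₁ * φ x.toAdd := by
      intro x; rw [hglAut, hφA]
    intro n x
    have hzp : monodromy A n = (glAut A) ^ n.toAdd := by
      simp [monodromy, zpowersHom_apply]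
    rw [hzp]
    exact zpow_scale (glAut A) (fun y => φ y.toAdd) lam₁ (ne_of_gt hpos) hψ n.toAdd x
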